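/- Let V be a finite type with at least two elements, w : V → V → ℕ∞, d : ℕ, and let w^{≤d} be the capped graph on V. Then there exist u ≠ v with dist_w(u,v) ≥ d if and only if there exist u ≠ v with dist_{w^{≤d}}(u,v) = d. Equivalently, the diameter of the original graph is at least d exactly when some off-diagonal entry of the constant matrix with all off-diagonal entries d is a correct distance of the capped graph. -/

import Mathlib

/-- Weight of a walk starting at `u` and visiting the vertices of `p` in order. -/
def walkWeight {V : Type*} (w : V → V → ℕ∞) : V → List V → ℕ∞
  | _, [] => 0
  | u, x :: xs => w u x + walkWeight w x xs

/-- Shortest-path distance: infimum of weights of walks from `u` to `v`. -/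
noncomputable def gdist {V : Type*} (w : V → V → ℕ∞) (u v : V) : ℕ∞ :=
  ⨅ (p : List V) (_ : (u :: p).getLast (List.cons_ne_nil u p) = v), walkWeight w u p

/-- Eccentricity of a vertex. -/
noncomputable def ecc {V : Type*} (w : V → V → ℕ∞) (v : V) : ℕ∞ :=
  ⨆ u, gdist w v u

/-- Radius. -/
noncomputable def rad {V : Type*} (w : V → V → ℕ∞) : ℕ∞ :=
  ⨅ v, ecc w v

/-- Diameter. -/
noncomputable def diam {V : Type*} (w : V → V → ℕ∞) : ℕ∞ :=
  ⨆ v, ecc w v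

/-- Capped graph: add an edge of weight `d` between every ordered pair of distinct vertices. -/
noncomputable def capped {V : Type*} [DecidableEq V] (w : V → V → ℕ∞) (d : ℕ) : V → V → ℕ∞ :=
  fun u v => if u = v then w u v else min (w u v) (d : ℕ∞)

private lemma min_add_min_aux (a b d : ℕ∞) : min (a + b) d ≤ min a d + min b d := by
  rcases le_total a d with h | h
  · rcases le_total b d with h' | h'
    · rw [min_eq_left h, min_eq_left h']; exact min_le_left _ _
    · rw [min_eq_right h']
      exact le_trans (min_le_right _ _) le_add_self
  · rw [min_eq_right h]
    exact le_trans (min_le_right _ _) le_self_add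

private lemma capped_le {V : Type*} [DecidableEq V] (w : V → V → ℕ∞) (d : ℕ) (u v : V) :
    capped w d u v ≤ w u v := by
  unfold capped; split
  · exact le_refl _
  · exact min_le_left _ _

private lemma min_le_capped {V : Type*} [DecidableEq V] (w : V → V → ℕ∞) (d : ℕ) (u v : V) :
    min (w u v) (d : ℕ∞) ≤ capped w d u v := by
  unfold capped; split
  · exact min_le_left _ _
  · exact le_refl _

private lemma ww_capped_le {V : Type*} [DecidableEq V] (w : V → V → ℕ∞) (d : ℕ) :
    ∀ (p : List V) (u : V), walkWeight (capped w d) u p ≤ walkWeight w u p := by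
  intro p
  induction p with
  | nil => intro u; exact le_refl _
  | cons x xs ih =>
    intro u
    exact add_le_add (capped_le w d u x) (ih x)

private lemma min_le_ww_capped {V : Type*} [DecidableEq V] (w : V → V → ℕ∞) (d : ℕ) :
    ∀ (p : List V) (u : V),
      min (walkWeight w u p) (d : ℕ∞) ≤ walkWeight (capped w d) u p := by
  intro p
  induction p with
  | nil => intro u; simp [walkWeight]
  | cons x xs ih =>
    intro u
    calc min (walkWeight w u (x :: xs)) (d : ℕ∞)
        ≤ min (w u x) d + min (walkWeight w x xs) d := min_add_min_aux _ _ _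
      _ ≤ capped w d u x + walkWeight (capped w d) x xs :=
          add_le_add (min_le_capped w d u x) (ih x)

private lemma gdist_capped_eq {V : Type*} [DecidableEq V] (w : V → V → ℕ∞) (d : ℕ)
    {u v : V} (huv : u ≠ v) :
    gdist (capped w d) u v = min (gdist w u v) (d : ℕ∞) := by
  apply le_antisymm
  · apply le_min
    · exact le_iInf₂ fun p hp => le_trans (iInf₂_le p hp) (ww_capped_le w d p u)
    · have h : ((u :: [v]).getLast (List.cons_ne_nil u [v])) = v := rfl
      refine le_trans (iInf₂_le [v] h) ?_
      show capped w d u v + 0 ≤ (d : ℕ∞)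
      rw [add_zero]
      unfold capped
      rw [if_neg huv]
      exact min_le_right _ _
  · apply le_iInf₂
    intro p hp
    refine le_trans ?_ (min_le_ww_capped w d p u)
    exact min_le_min_right _ (iInf₂_le p hp)

theorem stmt11 {V : Type*} [Fintype V] [DecidableEq V] [Nontrivial V]
    (w : V → V → ℕ∞) (d : ℕ) :
    (∃ u v : V, u ≠ v ∧ (d : ℕ∞) ≤ gdist w u v) ↔
      (∃ u v : V, u ≠ v ∧ gdist (capped w d) u v = (d : ℕ∞)) := by
  constructor
  · rintro ⟨u, v, huv, h⟩
    exact ⟨u, v, huv, by rw [gdist_capped_eq w d huv, min_eq_right h]⟩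
  · rintro ⟨u, v, huv, h⟩
    refine ⟨u, v, huv, ?_⟩
    rw [gdist_capped_eq w d huv] at h
    rcases le_total (gdist w u v) (d : ℕ∞) with h' | h'
    · rw [min_eq_left h'] at h; exact h.ge
    · exact h'
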